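/- For every integer a with 0 ≤ a ≤ N+1 and every u ∈ ℂ, T^a(u+a)·[0,1,…,N](u) = [0,1,…,a−1,a+1,…,N+1](u); that is, T^a(u+a) equals the ratio of Casorati determinants [0,1,…,a−1,a+1,…,N+1](u)/[0,1,…,N](u) whenever the denominator is nonzero. -/

import Mathlib

open Complex

noncomputable def oneSubXD (x w : ℂ → ℂ) : ℂ → ℂ := fun u => w u - x u * w (u + 2)

noncomputable def Lop (x : ℕ → ℂ → ℂ) : ℕ → (ℂ → ℂ) → (ℂ → ℂ)
  | 0 => fun w => w
  | k + 1 => fun w => oneSubXD (x (k + 1)) (Lop x k w)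

noncomputable def casorati (N : ℕ) (w : ℕ → ℂ → ℂ) (idx : ℕ → ℕ) (u : ℂ) : ℂ :=
  Matrix.det (Matrix.of fun j k : Fin (N + 1) => w (j.1 + 1) (u + 2 * (idx k.1 : ℂ)))

noncomputable def Pprod (x : ℕ → ℂ → ℂ) : ℕ → ℂ → ℂ
  | 0 => fun _ => 1
  | m + 1 => fun u => x (m + 1) u * Pprod x m (u + 2)

lemma Lop_vanish (x : ℕ → ℂ → ℂ) : ∀ (m : ℕ) (w : ℂ → ℂ) (u : ℂ),
    (∀ j : ℕ, j ≤ m → w (u + 2 * j) = 0) → Lop x m w u = 0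
  | 0, w, u, h => by simpa [Lop] using h 0 le_rfl
  | m + 1, w, u, h => by
      have h1 := Lop_vanish x m w u (fun j hj => h j (by omega))
      have h2 := Lop_vanish x m w (u + 2) (fun j hj => by
        have e : u + 2 + 2 * (j : ℂ) = u + 2 * ((j + 1 : ℕ) : ℂ) := by push_cast; ring
        rw [e]; exact h (j + 1) (by omega))
      simp [Lop, oneSubXD, h1, h2]

lemma Lop_top (x : ℕ → ℂ → ℂ) : ∀ (m : ℕ) (w : ℂ → ℂ) (u : ℂ),
    (∀ j : ℕ, j < m → w (u + 2 * j) = 0) →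
    Lop x m w u = (-1) ^ m * Pprod x m u * w (u + 2 * m)
  | 0, w, u, _ => by simp [Lop, Pprod]
  | m + 1, w, u, h => by
      have h1 : Lop x m w u = 0 :=
        Lop_vanish x m w u (fun j hj => h j (by omega))
      have h2 := Lop_top x m w (u + 2) (fun j hj => by
        have e : u + 2 + 2 * (j : ℂ) = u + 2 * ((j + 1 : ℕ) : ℂ) := by push_cast; ring
        rw [e]; exact h (j + 1) (by omega))
      have e : u + 2 + 2 * (m : ℂ) = u + 2 * ((m + 1 : ℕ) : ℂ) := by push_cast; ring
      show Lop x m w u - x (m + 1) u * Lop x m w (u + 2) = _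
      rw [h1, h2, e]
      show _ = (-1) ^ (m + 1) * (x (m + 1) u * Pprod x m (u + 2)) * _
      ring

lemma det_shift (m a : ℕ) (V : ℕ → Fin (m + 1) → ℂ) :
    ∀ d : ℕ, a + d ≤ m →
    Matrix.det (Matrix.of fun j k : Fin (m + 1) =>
      V (if k.1 < a then k.1 else if k.1 < a + d then k.1 + 1
         else if k.1 = a + d then m + 1 else k.1) j)
    = (-1 : ℂ) ^ d *
      Matrix.det (Matrix.of fun j k : Fin (m + 1) => V (if k.1 = a then m + 1 else k.1) j)
  | 0, h => by
      have hmat : (Matrix.of fun j k : Fin (m + 1) =>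
          V (if k.1 < a then k.1 else if k.1 < a + 0 then k.1 + 1
             else if k.1 = a + 0 then m + 1 else k.1) j)
          = Matrix.of fun j k : Fin (m + 1) => V (if k.1 = a then m + 1 else k.1) j := by
        ext j k
        simp only [Matrix.of_apply]
        congr 1
        split_ifs <;> omega
      rw [hmat]; ring
  | d + 1, h => by
      have hd : a + d ≤ m := by omega
      set i : Fin (m + 1) := ⟨a + d, by omega⟩ with hi
      set i' : Fin (m + 1) := ⟨a + d + 1, by omega⟩ with hi'
      have hiv : (i : ℕ) = a + d := rfl
      have hi'v : (i' : ℕ) = a + d + 1 := rfl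
      have hne : i ≠ i' := by
        intro hc
        have := congrArg Fin.val hc
        rw [hiv, hi'v] at this
        omega
      have hswap : (Matrix.of fun j k : Fin (m + 1) =>
          V (if k.1 < a then k.1 else if k.1 < a + (d + 1) then k.1 + 1
             else if k.1 = a + (d + 1) then m + 1 else k.1) j)
          = (Matrix.of fun j k : Fin (m + 1) =>
          V (if k.1 < a then k.1 else if k.1 < a + d then k.1 + 1
             else if k.1 = a + d then m + 1 else k.1) j).submatrix id (Equiv.swap i i') := by
        ext j k
        simp only [Matrix.submatrix_apply, Matrix.of_apply, id_eq]
        by_cases hk : k = i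
        · subst hk
          rw [Equiv.swap_apply_left]
          congr 1
          rw [hiv, hi'v]
          split_ifs <;> omega
        · by_cases hk' : k = i'
          · subst hk'
            rw [Equiv.swap_apply_right]
            congr 1
            rw [hiv, hi'v]
            split_ifs <;> omega
          · rw [Equiv.swap_apply_of_ne_of_ne hk hk']
            congr 1
            have e1 : (k : ℕ) ≠ a + d := fun hc => hk (Fin.ext (by rw [hiv]; exact hc))
            have e2 : (k : ℕ) ≠ a + d + 1 := fun hc => hk' (Fin.ext (by rw [hi'v]; exact hc))
            split_ifs <;> omega
      rw [hswap, Matrix.det_permute', Equiv.Perm.sign_swap hne, det_shift m a V d hd]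
      push_cast
      ring
open Matrix in
theorem cramer_A2_odd
    (n : ℕ) (hn : 2 ≤ n) (N : ℕ) (hN : N = 2 * n - 1)
    (hbar : ℂ) (hbar_ne : hbar ≠ 0) (s : ℂ)
    (hs : s = (Real.pi : ℂ) * Complex.I / (2 * hbar))
    (Q : ℕ → ℂ → ℂ) (hQ0 : ∀ u, Q 0 u = 1)
    (hQne : ∀ a, 1 ≤ a → a ≤ n → ∀ u, Q a u ≠ 0)
    (hconst : ℕ → ℂ)
    (hQper : ∀ a, 1 ≤ a → a ≤ n → hconst a ≠ 0 ∧
      ∀ u, Q a (u + (Real.pi : ℂ) * Complex.I / hbar) = hconst a * Q a u)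
    (Y : ℕ → ℂ → ℂ) (hY : ∀ a u, Y a u = Q a (u - 1) / Q a (u + 1))
    (x : ℕ → ℂ → ℂ)
    (hxa : ∀ a, 1 ≤ a → a ≤ n - 1 → ∀ u : ℂ,
      x a u = Y a (u + a) / Y (a - 1) (u + a + 1))
    (hxn : ∀ u : ℂ, x n u = Y n (u + n) * Y n (u + n + s) / Y (n - 1) (u + n + 1))
    (hxnbar : ∀ u : ℂ, x (n + 1) u
      = Y (n - 1) (u + n + 1 + s) / (Y n (u + n + 2) * Y n (u + n + 2 + s)))
    (hxbar : ∀ a, 1 ≤ a → a ≤ n - 1 → ∀ u : ℂ,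
      x (2 * n - a + 1) u = Y (a - 1) (u + 2 * (n : ℂ) - a + 1 + s)
        / Y a (u + 2 * (n : ℂ) - a + 2 + s))
    (T : ℤ → ℂ → ℂ)
    (hTneg : ∀ a : ℤ, a < 0 → ∀ u, T a u = 0)
    (hTbig : ∀ a : ℤ, (N : ℤ) + 1 < a → ∀ u, T a u = 0)
    (hTL : ∀ w : ℂ → ℂ, ∀ u : ℂ, Lop x (N + 1) w u
      = ∑ a ∈ Finset.range (N + 2), (-1) ^ a * T a (u + a) * w (u + 2 * a))
    (w : ℕ → ℂ → ℂ)
    (hw : ∀ b, 1 ≤ b → b ≤ N + 1 → ∀ u : ℂ, Lop x (N + 1) (w b) u = 0)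
    (hxi : ∀ u : ℂ, casorati N w (fun k => k) u ≠ 0)
    :
    ∀ a : ℕ, a ≤ N + 1 → ∀ u : ℂ,
      T (a : ℤ) (u + a) * casorati N w (fun k => k) u
        = casorati N w (fun k => if k < a then k else k + 1) u := by
  obtain ⟨p, rfl⟩ : ∃ p, n = p + 1 := ⟨n - 1, by omega⟩
  have hp : 1 ≤ p := by omega
  have hN2 : N + 1 = 2 * (p + 1) := by omega
  -- basic facts about Y
  have hY0 : ∀ v : ℂ, Y 0 v = 1 := by
    intro v; rw [hY, hQ0, hQ0]; norm_num
  have hYne : ∀ b, b ≤ p + 1 → ∀ v : ℂ, Y b v ≠ 0 := by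
    intro b hb v
    rcases Nat.eq_zero_or_pos b with hb0 | hb1
    · subst hb0; rw [hY0]; exact one_ne_zero
    · rw [hY]; exact div_ne_zero (hQne b hb1 hb _) (hQne b hb1 hb _)
  -- Pprod computations
  have P1 : ∀ m, m ≤ p → ∀ v : ℂ, Pprod x m v = Y m (v + m) := by
    intro m
    induction m with
    | zero =>
      intro _ v
      show (1 : ℂ) = Y 0 (v + ((0:ℕ):ℂ))
      rw [hY0]
    | succ m ih =>
      intro hm v
      have hm' : m ≤ p := by omega
      have hma : m + 1 ≤ (p + 1) - 1 := by omega
      show x (m+1) v * Pprod x m (v + 2) = Y (m+1) (v + ((m+1:ℕ):ℂ))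
      rw [hxa (m+1) (by omega) hma, ih hm' (v+2)]
      simp only [Nat.add_sub_cancel]
      have e1 : v + 2 + (m:ℂ) = v + ((m+1:ℕ):ℂ) + 1 := by push_cast; ring
      rw [e1, div_mul_cancel₀ _ (hYne m (by omega) _)]
  have P2 : ∀ v : ℂ, Pprod x (p+1) v
      = Y (p+1) (v + ((p+1:ℕ):ℂ)) * Y (p+1) (v + ((p+1:ℕ):ℂ) + s) := by
    intro v
    show x (p+1) v * Pprod x p (v + 2) = _
    rw [hxn v, P1 p le_rfl (v+2)]
    simp only [Nat.add_sub_cancel]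
    have e1 : v + 2 + (p:ℂ) = v + ((p+1:ℕ):ℂ) + 1 := by push_cast; ring
    rw [e1, div_mul_cancel₀ _ (hYne p (by omega) _)]
  have P3 : ∀ v : ℂ, Pprod x (p+2) v = Y p (v + ((p+1:ℕ):ℂ) + 1 + s) := by
    intro v
    show x (p+1+1) v * Pprod x (p+1) (v + 2) = _
    rw [hxnbar v, P2 (v+2)]
    simp only [Nat.add_sub_cancel]
    have e1 : v + 2 + ((p+1:ℕ):ℂ) = v + ((p+1:ℕ):ℂ) + 2 := by ring
    rw [e1,
      div_mul_cancel₀ _ (mul_ne_zero (hYne (p+1) le_rfl _) (hYne (p+1) le_rfl _))]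
  have P4 : ∀ m, m ≤ p → ∀ v : ℂ,
      Pprod x (p+2+m) v = Y (p-m) (v + ((p+1:ℕ):ℂ) + 1 + (m:ℂ) + s) := by
    intro m
    induction m with
    | zero =>
      intro _ v
      have e : v + ((p+1:ℕ):ℂ) + 1 + ((0:ℕ):ℂ) + s = v + ((p+1:ℕ):ℂ) + 1 + s := by
        push_cast; ring
      rw [e]
      exact P3 v
    | succ m ih =>
      intro hm v
      have hm' : m ≤ p := by omega
      show x (p+2+m+1) v * Pprod x (p+2+m) (v+2) = _
      have hidx : 2 * (p+1) - (p - m) + 1 = p+2+m+1 := by omega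
      have hx := hxbar (p - m) (by omega) (by simp only [Nat.add_sub_cancel]; omega) v
      rw [hidx] at hx
      rw [hx, ih hm' (v+2)]
      have hc : ((p - m : ℕ):ℂ) = (p:ℂ) - (m:ℂ) := by
        rw [Nat.cast_sub hm']
      have e1 : v + 2*((p+1:ℕ):ℂ) - ((p-m:ℕ):ℂ) + 2 + s
          = v + 2 + ((p+1:ℕ):ℂ) + 1 + (m:ℂ) + s := by
        rw [hc]; push_cast; ring
      have e2 : v + 2*((p+1:ℕ):ℂ) - ((p-m:ℕ):ℂ) + 1 + s
          = v + ((p+1:ℕ):ℂ) + 1 + ((m+1:ℕ):ℂ) + s := by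
        rw [hc]; push_cast; ring
      have e3 : p - m - 1 = p - (m+1) := by omega
      rw [e1, e2, e3, div_mul_cancel₀ _ (hYne (p-m) (by omega) _)]
  have Ptot : ∀ v : ℂ, Pprod x (N+1) v = 1 := by
    intro v
    have h1 : N + 1 = p + 2 + p := by omega
    rw [h1, P4 p le_rfl v]
    simp only [Nat.sub_self]
    rw [hY0]
  have hNeven : (-1 : ℂ) ^ (N + 1) = 1 := by
    rw [hN2, pow_mul]
    norm_num
  -- T^{N+1} = 1
  have TN1 : ∀ v : ℂ, T ((N+1 : ℕ) : ℤ) v = 1 := by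
    intro v
    set u : ℂ := v - ((N+1 : ℕ) : ℂ) with hu
    have huv : u + ((N+1 : ℕ) : ℂ) = v := by rw [hu]; ring
    set δ : ℂ → ℂ := fun z => if z = u + 2 * ((N+1 : ℕ) : ℂ) then (1:ℂ) else 0 with hδ
    have hne : ∀ j : ℕ, j < N + 1 → δ (u + 2 * (j:ℂ)) = 0 := by
      intro j hj
      simp only [hδ]
      rw [if_neg]
      intro hc
      have h2 : 2 * (j:ℂ) = 2 * ((N+1:ℕ):ℂ) := add_left_cancel hc
      have h3 : (j:ℂ) = ((N+1:ℕ):ℂ) := mul_left_cancel₀ two_ne_zero h2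
      have h4 : j = N + 1 := Nat.cast_injective h3
      omega
    have hδ1 : δ (u + 2 * ((N+1:ℕ):ℂ)) = 1 := by simp [hδ]
    have hL := Lop_top x (N+1) δ u hne
    rw [hTL δ u, Finset.sum_range_succ] at hL
    have hz : ∀ a ∈ Finset.range (N+1),
        (-1:ℂ)^a * T a (u + a) * δ (u + 2*(a:ℂ)) = 0 := by
      intro a haa
      rw [Finset.mem_range] at haa
      rw [hne a haa, mul_zero]
    rw [Finset.sum_eq_zero hz, zero_add, hδ1, Ptot u, hNeven, huv] at hL
    simpa using hL
  -- main argument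
  intro a ha u
  by_cases hlt : a < N + 1
  · -- Cramer's rule case
    set V : ℕ → Fin (N+1) → ℂ := fun b j => w (j.1 + 1) (u + 2 * (b:ℂ)) with hV
    set M : Matrix (Fin (N+1)) (Fin (N+1)) ℂ := Matrix.of (fun j k => V k.1 j) with hM
    set c : Fin (N+1) → ℂ := fun k => (-1:ℂ)^(k.1) * T k.1 (u + k.1) with hc
    have hMdet : casorati N w (fun k => k) u = M.det := rfl
    have hrel : M *ᵥ c = -V (N+1) := by
      funext j
      have h0 := hTL (w (j.1+1)) u
      rw [hw (j.1+1) (by omega) (by have := j.2; omega) u, Finset.sum_range_succ,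
        TN1, hNeven] at h0
      have hfin : ∑ k : Fin (N+1),
            ((-1:ℂ)^(k:ℕ) * T (k:ℕ) (u + ((k:ℕ):ℂ)) * w (j.1+1) (u + 2*((k:ℕ):ℂ)))
          = ∑ b ∈ Finset.range (N+1), (-1:ℂ)^b * T b (u + (b:ℂ)) * w (j.1+1) (u + 2*(b:ℂ)) :=
        Fin.sum_univ_eq_sum_range
          (fun b => (-1:ℂ)^b * T b (u + (b:ℂ)) * w (j.1+1) (u + 2*(b:ℂ))) (N+1)
      have hsum : (M *ᵥ c) j
          = ∑ b ∈ Finset.range (N+1), (-1:ℂ)^b * T b (u + b) * w (j.1+1) (u + 2*(b:ℂ)) := by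
        have e0 : (M *ᵥ c) j = ∑ k : Fin (N+1), M j k * c k := rfl
        rw [e0, ← hfin]
        refine Finset.sum_congr rfl (fun k _ => ?_)
        simp only [hM, hc, hV, Matrix.of_apply]
        ring
      have hgoal : (-V (N+1)) j = -(w (j.1+1) (u + 2*((N+1:ℕ):ℂ))) := by
        simp [hV]
      rw [hgoal, hsum]
      linear_combination -h0
    have hcr : M.det • c = Matrix.cramer M (M *ᵥ c) := by
      rw [Matrix.cramer_eq_adjugate_mulVec, Matrix.mulVec_mulVec, Matrix.adjugate_mul,
        Matrix.smul_mulVec, Matrix.one_mulVec]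
    set ia : Fin (N+1) := ⟨a, hlt⟩ with hia
    have key : M.det * c ia = -((Matrix.updateCol M ia (V (N+1))).det) := by
      have h1 : (M.det • c) ia = M.det * c ia := rfl
      rw [← h1, hcr, hrel, map_neg]
      simp only [Pi.neg_apply, Matrix.cramer_apply]
    have hupdate : (Matrix.of fun j k : Fin (N+1) => V (if k.1 = a then N + 1 else k.1) j)
        = Matrix.updateCol M ia (V (N+1)) := by
      ext j k
      simp only [Matrix.of_apply, Matrix.updateCol_apply]
      by_cases hk : (k:ℕ) = a
      · have hk' : k = ia := Fin.ext hk
        rw [if_pos hk, if_pos hk']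
      · have hk' : k ≠ ia := fun h => hk (congrArg Fin.val h)
        rw [if_neg hk, if_neg hk']
        rfl
    have hshift := det_shift N a V (N - a) (by omega)
    have hcasA : casorati N w (fun k => if k < a then k else k + 1) u
        = Matrix.det (Matrix.of fun j k : Fin (N+1) =>
            V (if k.1 < a then k.1 else if k.1 < a + (N-a) then k.1 + 1
               else if k.1 = a + (N-a) then N + 1 else k.1) j) := by
      unfold casorati
      congr 1
      ext j k
      simp only [Matrix.of_apply, hV]
      have e : (if (k:ℕ) < a then (k:ℕ) else (k:ℕ) + 1)
          = (if (k:ℕ) < a then (k:ℕ) else if (k:ℕ) < a + (N-a) then (k:ℕ)+1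
             else if (k:ℕ) = a + (N-a) then N+1 else (k:ℕ)) := by
        have hk2 := k.2
        split_ifs <;> omega
      rw [e]
    have key2 : (Matrix.updateCol M ia (V (N+1))).det = -(M.det * c ia) := by
      linear_combination key
    have hcia : c ia = (-1:ℂ)^a * T (a : ℤ) (u + (a:ℂ)) := rfl
    have hsign : (-1:ℂ)^(N-a) * (-1:ℂ)^a = -1 := by
      rw [← pow_add, show N - a + a = N from by omega,
        show N = 2*p + 1 from by omega, pow_succ, pow_mul]
      norm_num
    rw [hMdet, hcasA, hshift, hupdate, key2, hcia]
    linear_combination (T (a : ℤ) (u + (a:ℂ)) * M.det) * hsign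
  · -- a = N + 1
    have haN : a = N + 1 := by omega
    subst haN
    have hmat : casorati N w (fun k => if k < N + 1 then k else k + 1) u
        = casorati N w (fun k => k) u := by
      unfold casorati
      congr 1
      ext j k
      simp only [Matrix.of_apply]
      rw [if_pos k.2]
    rw [hmat, TN1, one_mul]
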